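/- Discrete fuzzy Hutchinson–Barnsley theorem: let S be an IFZS of Banach contractions on a complete metric space with fuzzy attractor u_S and α := max Lip(φⱼ) < 1, X̂ a proper ε-net, r an ε-projection, Ŝ the discretized IFZS. Then for any u ∈ F*_{X̂} and n ∈ ℕ, d_∞(e(Z_Ŝⁿ(u)), u_S) ≤ 5ε/(1−α) + αⁿ·d_∞(e(u), u_S). -/

import Mathlib

open Metric Set Filter

private lemma aux_fin_attains {X : Type*} (v : X → ℝ)
    (h01 : ∀ x, v x ∈ Set.Icc (0:ℝ) 1)
    (hfin : {x | 0 < v x}.Finite) (S : Set X) (hM : 0 < sSup (v '' S)) :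
    ∃ y ∈ S, v y = sSup (v '' S) := by
  have hbdd : BddAbove (v '' S) := ⟨1, by rintro b ⟨x, -, rfl⟩; exact (h01 x).2⟩
  have hne : (v '' S).Nonempty := by
    by_contra h
    rw [Set.not_nonempty_iff_eq_empty] at h
    rw [h, Real.sSup_empty] at hM
    exact lt_irrefl 0 hM
  obtain ⟨a, ha, ha0⟩ := exists_lt_of_lt_csSup hne hM
  obtain ⟨y₀, hy₀S, hy₀⟩ := ha
  have hy₀pos : 0 < v y₀ := hy₀ ▸ ha0
  have hTfin : (S ∩ {x | 0 < v x}).Finite := hfin.subset Set.inter_subset_right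
  obtain ⟨y, hyT, hymax⟩ := Set.exists_max_image _ v hTfin ⟨y₀, hy₀S, hy₀pos⟩
  refine ⟨y, hyT.1, le_antisymm (le_csSup hbdd ⟨y, hyT.1, rfl⟩) ?_⟩
  refine csSup_le hne ?_
  rintro b ⟨x, hxS, rfl⟩
  rcases le_or_gt (v x) 0 with h | h
  · have : 0 < v y := lt_of_lt_of_le hy₀pos (hymax y₀ ⟨hy₀S, hy₀pos⟩)
    linarith
  · exact hymax x ⟨hxS, h⟩

private lemma aux_usc_attains {X : Type*} [TopologicalSpace X] (f : X → ℝ)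
    (h01 : ∀ x, f x ∈ Set.Icc (0:ℝ) 1) (hc : UpperSemicontinuous f)
    (hs : IsCompact (closure {x | 0 < f x})) (P : Set X) (hP : IsClosed P)
    (hM : 0 < sSup (f '' P)) : ∃ y ∈ P, f y = sSup (f '' P) := by
  set M := sSup (f '' P) with hMdef
  have hbdd : BddAbove (f '' P) := ⟨1, by rintro b ⟨x, -, rfl⟩; exact (h01 x).2⟩
  have hne : (f '' P).Nonempty := by
    by_contra h
    rw [Set.not_nonempty_iff_eq_empty] at h
    rw [hMdef, h, Real.sSup_empty] at hM
    exact lt_irrefl 0 hM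
  set t : ℕ → ℝ := fun n => M - M / 2 * (1 / (n + 1)) with ht
  have htpos : ∀ n : ℕ, 0 < t n := by
    intro n
    have h1 : (1 : ℝ) / (n + 1) ≤ 1 := by
      rw [div_le_one (by positivity)]
      linarith [Nat.cast_nonneg (α := ℝ) n]
    have : M / 2 * (1 / (n + 1)) ≤ M / 2 * 1 := by
      apply mul_le_mul_of_nonneg_left h1 (by linarith)
    simp only [ht]
    nlinarith
  have htlt : ∀ n : ℕ, t n < M := by
    intro n
    have : (0:ℝ) < M / 2 * (1 / (n + 1)) := by positivity
    simp only [ht]; linarith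
  have htmono : ∀ n : ℕ, t n ≤ t (n + 1) := by
    intro n
    have h1 : (1 : ℝ) / (n + 1 + 1) ≤ 1 / (n + 1) := by
      apply one_div_le_one_div_of_le (by positivity)
      linarith
    have := mul_le_mul_of_nonneg_left h1 (by linarith : (0:ℝ) ≤ M / 2)
    simp only [ht]
    push_cast
    linarith
  set s : ℕ → Set X := fun n => P ∩ {x | t n ≤ f x} with hsdef
  have hclosed : ∀ n, IsClosed (s n) := fun n => hP.inter (hc.isClosed_preimage (t n))
  have hcpt : ∀ n, IsCompact (s n) := by
    intro n
    apply IsCompact.of_isClosed_subset hs (hclosed n)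
    intro x hx
    exact subset_closure (lt_of_lt_of_le (htpos n) hx.2)
  have hnonempty : ∀ n, (s n).Nonempty := by
    intro n
    obtain ⟨a, ⟨y, hyP, rfl⟩, hlt⟩ := exists_lt_of_lt_csSup hne (htlt n)
    exact ⟨y, hyP, hlt.le⟩
  have hsub : ∀ n, s (n + 1) ⊆ s n := by
    intro n x hx
    exact ⟨hx.1, (htmono n).trans hx.2⟩
  obtain ⟨y, hy⟩ := IsCompact.nonempty_iInter_of_sequence_nonempty_isCompact_isClosed
    s hsub hnonempty (hcpt 0) hclosed
  simp only [Set.mem_iInter] at hy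
  have hyP : y ∈ P := (hy 0).1
  refine ⟨y, hyP, le_antisymm (le_csSup hbdd ⟨y, hyP, rfl⟩) ?_⟩
  have htend : Tendsto t atTop (nhds M) := by
    have h0 : Tendsto (fun n : ℕ => (1:ℝ) / (n + 1)) atTop (nhds 0) :=
      tendsto_one_div_add_atTop_nhds_zero_nat
    have := (tendsto_const_nhds (x := M) (f := atTop)).sub
      ((tendsto_const_nhds (x := M / 2) (f := atTop (α := ℕ))).mul h0)
    simp only [ht, one_div]
    simpa using this
  exact le_of_tendsto' htend fun n => (hy n).2

open scoped Classical in
theorem stmt17 {X : Type*} [MetricSpace X] [CompleteSpace X] {J : Type*} [Fintype J] [Nonempty J]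
    (φ : J → X → X) (α : ℝ) (hα0 : 0 ≤ α) (hα1 : α < 1)
    (hφ : ∀ j, ∀ x y, dist (φ j x) (φ j y) ≤ α * dist x y)
    (ρ : J → ℝ → ℝ)
    (hρ_mono : ∀ j, MonotoneOn (ρ j) (Set.Icc (0 : ℝ) 1))
    (hρ_maps : ∀ j, ∀ t ∈ Set.Icc (0 : ℝ) 1, ρ j t ∈ Set.Icc (0 : ℝ) 1)
    (hρ_rc : ∀ j, ∀ a ∈ Set.Icc (0 : ℝ) 1, ContinuousWithinAt (ρ j) (Set.Ici a) a)
    (hρ0 : ∀ j, ρ j 0 = 0) (hρ1 : ∃ j, ρ j 1 = 1)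
    (uS : X → ℝ)
    (huS01 : ∀ x, uS x ∈ Set.Icc (0 : ℝ) 1) (huSn : ∃ x, uS x = 1)
    (huSc : UpperSemicontinuous uS) (huSs : IsCompact (closure {x | 0 < uS x}))
    (hfix : ∀ x, uS x = ⨆ j, ρ j (sSup (uS '' {y | φ j y = x})))
    (ε : ℝ) (hε : 0 < ε) (Xhat : Set X)
    (hnet : ∀ x : X, ∃ y ∈ Xhat, dist x y ≤ ε)
    (hproper : ∀ D : Set X, Bornology.IsBounded D → (D ∩ Xhat).Finite)
    (r : X → X) (hr_mem : ∀ x, r x ∈ Xhat) (hr_id : ∀ x ∈ Xhat, r x = x)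
    (hr_dist : ∀ x, dist x (r x) ≤ ε)
    (ZH : (X → ℝ) → X → ℝ)
    (hZH : ∀ v : X → ℝ, ∀ x, ZH v x =
      if x ∈ Xhat then ⨆ j, ρ j (sSup (v '' {y | y ∈ Xhat ∧ r (φ j y) = x})) else 0)
    (u : X → ℝ)
    (hu01 : ∀ x, u x ∈ Set.Icc (0 : ℝ) 1) (hun : ∃ x, u x = 1)
    (hufin : {x | 0 < u x}.Finite) (husub : {x | 0 < u x} ⊆ Xhat) :
    ∀ n : ℕ,
      (⨆ t ∈ Set.Ioc (0 : ℝ) 1,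
          Metric.hausdorffDist {x | t ≤ (ZH^[n] u) x} {x | t ≤ uS x})
        ≤ 5 * ε / (1 - α) + α ^ n *
            ⨆ t ∈ Set.Ioc (0 : ℝ) 1,
              Metric.hausdorffDist {x | t ≤ u x} {x | t ≤ uS x} := by
  have h1α : (0:ℝ) < 1 - α := by linarith
  have levClosed : ∀ t : ℝ, IsClosed {x | t ≤ uS x} := fun t => huSc.isClosed_preimage t
  have levC : ∀ t : ℝ, 0 < t → IsCompact {x | t ≤ uS x} := by
    intro t ht
    exact IsCompact.of_isClosed_subset huSs (levClosed t)
      (fun x hx => subset_closure (lt_of_lt_of_le ht hx))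
  have levNe : ∀ t : ℝ, t ≤ 1 → {x | t ≤ uS x}.Nonempty := by
    intro t ht
    obtain ⟨x, hx⟩ := huSn
    exact ⟨x, by rw [Set.mem_setOf_eq, hx]; exact ht⟩
  have bdd1 : ∀ (v : X → ℝ), (∀ x, v x ∈ Set.Icc (0:ℝ) 1) → ∀ S : Set X, BddAbove (v '' S) :=
    fun v hv S => ⟨1, by rintro b ⟨x, -, rfl⟩; exact (hv x).2⟩
  have bddJ : ∀ g : J → ℝ, BddAbove (Set.range g) := fun g => (Set.finite_range g).bddAbove
  have sSup01 : ∀ (v : X → ℝ), (∀ x, v x ∈ Set.Icc (0:ℝ) 1) → ∀ S : Set X,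
      sSup (v '' S) ∈ Set.Icc (0:ℝ) 1 := by
    intro v hv S
    rcases (v '' S).eq_empty_or_nonempty with h | h
    · rw [h, Real.sSup_empty]; exact ⟨le_refl 0, zero_le_one⟩
    · refine ⟨?_, csSup_le h ?_⟩
      · obtain ⟨a, x, hxS, rfl⟩ := h
        exact le_trans (hv x).1 (le_csSup (bdd1 v hv S) ⟨x, hxS, rfl⟩)
      · rintro b ⟨x, -, rfl⟩; exact (hv x).2
  have hZH01 : ∀ v : X → ℝ, (∀ x, v x ∈ Set.Icc (0:ℝ) 1) → ∀ x, ZH v x ∈ Set.Icc (0:ℝ) 1 := by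
    intro v hv x
    rw [hZH]
    split_ifs with hx
    · constructor
      · have j₀ : J := Classical.arbitrary J
        exact le_trans (hρ_maps j₀ _ (sSup01 v hv _)).1
          (le_ciSup (f := fun j => ρ j (sSup (v '' {y | y ∈ Xhat ∧ r (φ j y) = x})))
            (bddJ _) j₀)
      · exact ciSup_le fun j => (hρ_maps j _ (sSup01 v hv _)).2
    · exact ⟨le_refl 0, zero_le_one⟩
  have hZHsub : ∀ v : X → ℝ, {x | 0 < ZH v x} ⊆ Xhat := by
    intro v x hx
    by_contra h
    rw [Set.mem_setOf_eq, hZH, if_neg h] at hx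
    exact lt_irrefl 0 hx
  have hZHattain : ∀ v : X → ℝ, (∀ x, v x ∈ Set.Icc (0:ℝ) 1) → (∃ x, v x = 1) →
      {x | 0 < v x} ⊆ Xhat → ∃ x, ZH v x = 1 := by
    intro v hv hvat hsub
    obtain ⟨x₀, hx₀⟩ := hvat
    obtain ⟨j₁, hj₁⟩ := hρ1
    refine ⟨r (φ j₁ x₀), ?_⟩
    have hx₀X : x₀ ∈ Xhat := hsub (by rw [Set.mem_setOf_eq, hx₀]; norm_num)
    have hsup1 : sSup (v '' {y | y ∈ Xhat ∧ r (φ j₁ y) = r (φ j₁ x₀)}) = 1 := by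
      refine le_antisymm (sSup01 v hv _).2 ?_
      calc (1:ℝ) = v x₀ := hx₀.symm
      _ ≤ sSup (v '' {y | y ∈ Xhat ∧ r (φ j₁ y) = r (φ j₁ x₀)}) :=
          le_csSup (bdd1 v hv _) ⟨x₀, ⟨hx₀X, rfl⟩, rfl⟩
    rw [hZH, if_pos (hr_mem _)]
    refine le_antisymm (ciSup_le fun j => (hρ_maps j _ (sSup01 v hv _)).2) ?_
    calc (1:ℝ) = ρ j₁ (sSup (v '' {y | y ∈ Xhat ∧ r (φ j₁ y) = r (φ j₁ x₀)})) := by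
          rw [hsup1, hj₁]
    _ ≤ _ := le_ciSup (f := fun j => ρ j (sSup (v '' {y | y ∈ Xhat ∧ r (φ j y) = r (φ j₁ x₀)})))
          (bddJ _) j₁
  have hextract : ∀ (v : X → ℝ), (∀ x, v x ∈ Set.Icc (0:ℝ) 1) → ∀ x : X, ∀ t : ℝ,
      0 < t → t ≤ ZH v x →
      x ∈ Xhat ∧ ∃ j, t ≤ ρ j (sSup (v '' {y | y ∈ Xhat ∧ r (φ j y) = x})) ∧
        0 < sSup (v '' {y | y ∈ Xhat ∧ r (φ j y) = x}) := by
    intro v hv x t ht hx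
    rw [hZH] at hx
    by_cases hxX : x ∈ Xhat
    · rw [if_pos hxX] at hx
      refine ⟨hxX, ?_⟩
      obtain ⟨j, hjmax⟩ := Finite.exists_max
        (fun j => ρ j (sSup (v '' {y | y ∈ Xhat ∧ r (φ j y) = x})))
      have hj : t ≤ ρ j (sSup (v '' {y | y ∈ Xhat ∧ r (φ j y) = x})) :=
        le_trans hx (ciSup_le hjmax)
      refine ⟨j, hj, ?_⟩
      rcases (sSup01 v hv _).1.eq_or_lt with h | h
      · exfalso
        rw [← h, hρ0 j] at hj
        linarith
      · exact h
    · rw [if_neg hxX] at hx; linarith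
  have himg_ne : ∀ (v : X → ℝ) (S : Set X), 0 < sSup (v '' S) → (v '' S).Nonempty := by
    intro v S h
    rcases (v '' S).eq_empty_or_nonempty with he | hne
    · rw [he, Real.sSup_empty] at h; exact absurd h (lt_irrefl 0)
    · exact hne
  have hZHfin : ∀ v : X → ℝ, (∀ x, v x ∈ Set.Icc (0:ℝ) 1) → {x | 0 < v x}.Finite →
      {x | 0 < ZH v x}.Finite := by
    intro v hv hfin
    apply Set.Finite.subset (Set.finite_iUnion (fun j : J => hfin.image (fun y => r (φ j y))))
    intro x hx
    obtain ⟨hxX, j, hj, hMpos⟩ := hextract v hv x (ZH v x) hx le_rfl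
    obtain ⟨a, ⟨y, hyS, rfl⟩, ha⟩ := exists_lt_of_lt_csSup (himg_ne v _ hMpos) hMpos
    simp only [Set.mem_iUnion, Set.mem_image]
    exact ⟨j, y, ha, hyS.2⟩
  have hGood : ∀ n : ℕ, (∀ x, (ZH^[n] u) x ∈ Set.Icc (0:ℝ) 1) ∧ (∃ x, (ZH^[n] u) x = 1) ∧
      {x | 0 < (ZH^[n] u) x}.Finite ∧ {x | 0 < (ZH^[n] u) x} ⊆ Xhat := by
    intro n
    induction n with
    | zero =>
      simp only [Function.iterate_zero, id_eq]
      exact ⟨hu01, hun, hufin, husub⟩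
    | succ n ih =>
      obtain ⟨h01, hat, hfin, hsub⟩ := ih
      simp only [Function.iterate_succ_apply']
      exact ⟨hZH01 _ h01, hZHattain _ h01 hat hsub, hZHfin _ h01 hfin, hZHsub _⟩
  have Gprop : ∀ v : X → ℝ, (∀ x, v x ∈ Set.Icc (0:ℝ) 1) → (∃ x, v x = 1) →
      {x | 0 < v x}.Finite →
      (0 ≤ ⨆ t ∈ Set.Ioc (0:ℝ) 1, Metric.hausdorffDist {x | t ≤ v x} {x | t ≤ uS x}) ∧
      ∀ s : ℝ, 0 < s → s ≤ 1 → Metric.hausdorffDist {x | s ≤ v x} {x | s ≤ uS x} ≤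
        ⨆ t ∈ Set.Ioc (0:ℝ) 1, Metric.hausdorffDist {x | t ≤ v x} {x | t ≤ uS x} := by
    intro v hv hvat hvfin
    have hCb : Bornology.IsBounded ({x | 0 < v x} ∪ closure {x | 0 < uS x}) :=
      hvfin.isBounded.union huSs.isBounded
    obtain ⟨x₁, hx₁⟩ := hvat
    have hx₁pos : 0 < v x₁ := by rw [hx₁]; norm_num
    have hbound : ∀ s : ℝ, 0 < s → s ≤ 1 →
        Metric.hausdorffDist {x | s ≤ v x} {x | s ≤ uS x} ≤
          Metric.diam ({x | 0 < v x} ∪ closure {x | 0 < uS x}) := by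
      intro s hs hs1
      have hvne : x₁ ∈ {x | s ≤ v x} := by rw [Set.mem_setOf_eq, hx₁]; exact hs1
      obtain ⟨z₁, hz₁⟩ := levNe s hs1
      apply Metric.hausdorffDist_le_of_infDist Metric.diam_nonneg
      · intro x hx
        refine le_trans (Metric.infDist_le_dist_of_mem hz₁) ?_
        exact Metric.dist_le_diam_of_mem hCb (Or.inl (lt_of_lt_of_le hs hx))
          (Or.inr (subset_closure (lt_of_lt_of_le hs hz₁)))
      · intro z hz
        refine le_trans (Metric.infDist_le_dist_of_mem hvne) ?_
        exact Metric.dist_le_diam_of_mem hCb (Or.inr (subset_closure (lt_of_lt_of_le hs hz)))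
          (Or.inl hx₁pos)
    have hbddR : BddAbove (Set.range fun t : ℝ => ⨆ _ : t ∈ Set.Ioc (0:ℝ) 1,
        Metric.hausdorffDist {x | t ≤ v x} {x | t ≤ uS x}) := by
      refine ⟨max (Metric.diam ({x | 0 < v x} ∪ closure {x | 0 < uS x})) 0, ?_⟩
      rintro b ⟨t, rfl⟩
      dsimp only
      by_cases ht : t ∈ Set.Ioc (0:ℝ) 1
      · rw [ciSup_pos ht]
        exact le_max_of_le_left (hbound t ht.1 ht.2)
      · haveI : IsEmpty (t ∈ Set.Ioc (0:ℝ) 1) := ⟨ht⟩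
        rw [Real.iSup_of_isEmpty]
        exact le_max_right _ _
    have hle : ∀ s : ℝ, 0 < s → s ≤ 1 →
        Metric.hausdorffDist {x | s ≤ v x} {x | s ≤ uS x} ≤
          ⨆ t ∈ Set.Ioc (0:ℝ) 1, Metric.hausdorffDist {x | t ≤ v x} {x | t ≤ uS x} := by
      intro s hs hs1
      have heq : Metric.hausdorffDist {x | s ≤ v x} {x | s ≤ uS x} =
          ⨆ _ : s ∈ Set.Ioc (0:ℝ) 1, Metric.hausdorffDist {x | s ≤ v x} {x | s ≤ uS x} :=
        (ciSup_pos (f := fun _ => Metric.hausdorffDist {x | s ≤ v x} {x | s ≤ uS x})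
          (Set.mem_Ioc.mpr ⟨hs, hs1⟩)).symm
      rw [heq]
      exact le_ciSup hbddR s
    exact ⟨le_trans Metric.hausdorffDist_nonneg (hle 1 one_pos le_rfl), hle⟩
  have key : ∀ v : X → ℝ, (∀ x, v x ∈ Set.Icc (0:ℝ) 1) → (∃ x, v x = 1) →
      {x | 0 < v x}.Finite → {x | 0 < v x} ⊆ Xhat → ∀ D : ℝ, 0 ≤ D →
      (∀ s : ℝ, 0 < s → s ≤ 1 → Metric.hausdorffDist {x | s ≤ v x} {x | s ≤ uS x} ≤ D) →
      ∀ t : ℝ, 0 < t → t ≤ 1 →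
      Metric.hausdorffDist {x | t ≤ ZH v x} {x | t ≤ uS x} ≤ ε + α * D := by
    intro v hv hvat hvfin hvsub D hD0 hD t ht ht1
    have hεD : (0:ℝ) ≤ ε + α * D := add_nonneg hε.le (mul_nonneg hα0 hD0)
    have hvlevNe : ∀ s : ℝ, s ≤ 1 → {x | s ≤ v x}.Nonempty := by
      intro s hs
      obtain ⟨x, hx⟩ := hvat
      exact ⟨x, by rw [Set.mem_setOf_eq, hx]; exact hs⟩
    have hvlevFin : ∀ s : ℝ, 0 < s → {x | s ≤ v x}.Finite :=
      fun s hs => hvfin.subset fun x hx => lt_of_lt_of_le hs hx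
    have hfinE : ∀ s : ℝ, 0 < s → s ≤ 1 →
        EMetric.hausdorffEdist {x | s ≤ v x} {x | s ≤ uS x} ≠ ⊤ := by
      intro s hs hs1
      exact Metric.hausdorffEdist_ne_top_of_nonempty_of_bounded (hvlevNe s hs1) (levNe s hs1)
        (hvlevFin s hs).isBounded (levC s hs).isBounded
    apply Metric.hausdorffDist_le_of_infDist hεD
    · intro x hx
      rw [Set.mem_setOf_eq] at hx
      obtain ⟨hxX, j, hj, hMpos⟩ := hextract v hv x t ht hx
      obtain ⟨y, hyS, hyv⟩ := aux_fin_attains v hv hvfin _ hMpos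
      have hs0 : 0 < v y := by rw [hyv]; exact hMpos
      have hs1 : v y ≤ 1 := (hv y).2
      obtain ⟨z, hzmem, hzd⟩ := (levC (v y) hs0).exists_infDist_eq_dist (levNe (v y) hs1) y
      have hyz : dist y z ≤ D := by
        rw [← hzd]
        exact le_trans (Metric.infDist_le_hausdorffDist_of_mem
          (show y ∈ {x | v y ≤ v x} from le_refl (v y)) (hfinE (v y) hs0 hs1))
          (hD (v y) hs0 hs1)
      have h1 : uS z ≤ sSup (uS '' {y' | φ j y' = φ j z}) :=
        le_csSup (bdd1 uS huS01 _) ⟨z, rfl, rfl⟩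
      have h2 : ρ j (uS z) ≤ ρ j (sSup (uS '' {y' | φ j y' = φ j z})) :=
        hρ_mono j (huS01 z) (sSup01 uS huS01 _) h1
      have h3 : ρ j (v y) ≤ ρ j (uS z) := hρ_mono j ⟨hs0.le, hs1⟩ (huS01 z) hzmem
      have h4 : ρ j (sSup (uS '' {y' | φ j y' = φ j z})) ≤ uS (φ j z) := by
        rw [hfix (φ j z)]
        exact le_ciSup (f := fun i => ρ i (sSup (uS '' {y | φ i y = φ j z}))) (bddJ _) j
      have htz : t ≤ uS (φ j z) := by
        have h5 : t ≤ ρ j (v y) := by rw [hyv]; exact hj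
        linarith
      refine le_trans (Metric.infDist_le_dist_of_mem
        (show φ j z ∈ {x | t ≤ uS x} from htz)) ?_
      calc dist x (φ j z) ≤ dist x (φ j y) + dist (φ j y) (φ j z) := dist_triangle _ _ _
      _ ≤ ε + α * D := by
          have e1 : dist x (φ j y) ≤ ε := by
            rw [← hyS.2, dist_comm]
            exact hr_dist _
          have e2 : dist (φ j y) (φ j z) ≤ α * D :=
            le_trans (hφ j y z) (mul_le_mul_of_nonneg_left hyz hα0)
          linarith
    · intro z hz
      rw [Set.mem_setOf_eq] at hz
      have hz' : t ≤ ⨆ i, ρ i (sSup (uS '' {y | φ i y = z})) := by rw [← hfix z]; exact hz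
      obtain ⟨j, hjmax⟩ := Finite.exists_max (fun i => ρ i (sSup (uS '' {y | φ i y = z})))
      have hj : t ≤ ρ j (sSup (uS '' {y | φ j y = z})) := le_trans hz' (ciSup_le hjmax)
      have hNIcc := sSup01 uS huS01 {y | φ j y = z}
      have hNpos : 0 < sSup (uS '' {y | φ j y = z}) := by
        rcases hNIcc.1.eq_or_lt with h | h
        · exfalso; rw [← h, hρ0 j] at hj; linarith
        · exact h
      have hPclosed : IsClosed {y | φ j y = z} := by
        have hlip : LipschitzWith (Real.toNNReal α) (φ j) := by
          apply LipschitzWith.of_dist_le_mul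
          intro a b
          rw [Real.coe_toNNReal α hα0]
          exact hφ j a b
        exact isClosed_singleton.preimage hlip.continuous
      obtain ⟨y, hyP, hyv⟩ := aux_usc_attains uS huS01 huSc huSs _ hPclosed hNpos
      have hs0 : 0 < uS y := by rw [hyv]; exact hNpos
      have hs1 : uS y ≤ 1 := (huS01 y).2
      obtain ⟨w, hwmem, hwd⟩ :=
        ((hvlevFin (uS y) hs0).isCompact).exists_infDist_eq_dist (hvlevNe (uS y) hs1) y
      have hyw : dist y w ≤ D := by
        rw [← hwd]
        have hfin' : EMetric.hausdorffEdist {x | uS y ≤ uS x} {x | uS y ≤ v x} ≠ ⊤ := by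
          rw [show EMetric.hausdorffEdist {x | uS y ≤ uS x} {x | uS y ≤ v x} =
            EMetric.hausdorffEdist {x | uS y ≤ v x} {x | uS y ≤ uS x} from EMetric.hausdorffEdist_comm]
          exact hfinE (uS y) hs0 hs1
        calc Metric.infDist y {x | uS y ≤ v x}
            ≤ Metric.hausdorffDist {x | uS y ≤ uS x} {x | uS y ≤ v x} :=
              Metric.infDist_le_hausdorffDist_of_mem
                (show y ∈ {x | uS y ≤ uS x} from le_refl (uS y)) hfin'
        _ = Metric.hausdorffDist {x | uS y ≤ v x} {x | uS y ≤ uS x} :=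
              Metric.hausdorffDist_comm
        _ ≤ D := hD (uS y) hs0 hs1
      have hwX : w ∈ Xhat := hvsub (lt_of_lt_of_le hs0 hwmem)
      have hxmem : t ≤ ZH v (r (φ j w)) := by
        rw [hZH, if_pos (hr_mem _)]
        have h1 : v w ≤ sSup (v '' {y' | y' ∈ Xhat ∧ r (φ j y') = r (φ j w)}) :=
          le_csSup (bdd1 v hv _) ⟨w, ⟨hwX, rfl⟩, rfl⟩
        have h2 : ρ j (v w) ≤ ρ j (sSup (v '' {y' | y' ∈ Xhat ∧ r (φ j y') = r (φ j w)})) :=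
          hρ_mono j (hv w) (sSup01 v hv _) h1
        have h3 : ρ j (sSup (uS '' {y | φ j y = z})) ≤ ρ j (v w) := by
          apply hρ_mono j hNIcc (hv w)
          rw [← hyv]
          exact hwmem
        have h4 : ρ j (sSup (v '' {y' | y' ∈ Xhat ∧ r (φ j y') = r (φ j w)})) ≤
            ⨆ i, ρ i (sSup (v '' {y' | y' ∈ Xhat ∧ r (φ i y') = r (φ j w)})) :=
          le_ciSup (f := fun i => ρ i (sSup (v '' {y' | y' ∈ Xhat ∧ r (φ i y') = r (φ j w)})))
            (bddJ _) j
        linarith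
      refine le_trans (Metric.infDist_le_dist_of_mem
        (show r (φ j w) ∈ {x | t ≤ ZH v x} from hxmem)) ?_
      calc dist z (r (φ j w)) ≤ dist z (φ j w) + dist (φ j w) (r (φ j w)) := dist_triangle _ _ _
      _ ≤ ε + α * D := by
          have e1 : dist z (φ j w) ≤ α * D := by
            have hyPz : φ j y = z := hyP
            rw [← hyPz]
            exact le_trans (hφ j y w) (mul_le_mul_of_nonneg_left hyw hα0)
          have e2 : dist (φ j w) (r (φ j w)) ≤ ε := hr_dist _
          linarith
  -- main induction
  have main : ∀ n : ℕ,
      (⨆ t ∈ Set.Ioc (0:ℝ) 1, Metric.hausdorffDist {x | t ≤ (ZH^[n] u) x} {x | t ≤ uS x})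
        ≤ ε * (∑ k ∈ Finset.range n, α ^ k) + α ^ n *
          (⨆ t ∈ Set.Ioc (0:ℝ) 1, Metric.hausdorffDist {x | t ≤ u x} {x | t ≤ uS x}) := by
    intro n
    induction n with
    | zero =>
      simp only [Function.iterate_zero, id_eq, Finset.range_zero, Finset.sum_empty, mul_zero,
        pow_zero, one_mul, zero_add]
      exact le_refl _
    | succ n ih =>
      obtain ⟨h01, hat, hfin, hsub⟩ := hGood n
      have hGn := Gprop (ZH^[n] u) h01 hat hfin
      have hstepnn : (0:ℝ) ≤ ε + α *
          (⨆ t ∈ Set.Ioc (0:ℝ) 1,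
            Metric.hausdorffDist {x | t ≤ (ZH^[n] u) x} {x | t ≤ uS x}) :=
        add_nonneg hε.le (mul_nonneg hα0 hGn.1)
      have hsup : (⨆ t ∈ Set.Ioc (0:ℝ) 1,
          Metric.hausdorffDist {x | t ≤ (ZH (ZH^[n] u)) x} {x | t ≤ uS x}) ≤
          ε + α * (⨆ t ∈ Set.Ioc (0:ℝ) 1,
            Metric.hausdorffDist {x | t ≤ (ZH^[n] u) x} {x | t ≤ uS x}) := by
        refine Real.iSup_le (fun t => Real.iSup_le (fun ht => ?_) hstepnn) hstepnn
        exact key (ZH^[n] u) h01 hat hfin hsub _ hGn.1 hGn.2 t ht.1 ht.2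
      have hmul := mul_le_mul_of_nonneg_left ih hα0
      calc (⨆ t ∈ Set.Ioc (0:ℝ) 1,
          Metric.hausdorffDist {x | t ≤ (ZH^[n+1] u) x} {x | t ≤ uS x})
          = (⨆ t ∈ Set.Ioc (0:ℝ) 1,
            Metric.hausdorffDist {x | t ≤ (ZH (ZH^[n] u)) x} {x | t ≤ uS x}) := by
            simp only [Function.iterate_succ_apply']
      _ ≤ ε + α * (⨆ t ∈ Set.Ioc (0:ℝ) 1,
            Metric.hausdorffDist {x | t ≤ (ZH^[n] u) x} {x | t ≤ uS x}) := hsup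
      _ ≤ ε + α * (ε * (∑ k ∈ Finset.range n, α ^ k) + α ^ n *
            (⨆ t ∈ Set.Ioc (0:ℝ) 1,
              Metric.hausdorffDist {x | t ≤ u x} {x | t ≤ uS x})) := by linarith
      _ = ε * (∑ k ∈ Finset.range (n+1), α ^ k) + α ^ (n+1) *
            (⨆ t ∈ Set.Ioc (0:ℝ) 1,
              Metric.hausdorffDist {x | t ≤ u x} {x | t ≤ uS x}) := by
            rw [geom_sum_succ]
            ring
  intro n
  refine le_trans (main n) ?_
  have hS : (∑ k ∈ Finset.range n, α ^ k) ≤ 1 / (1 - α) := by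
    rw [geom_sum_eq (by linarith : α ≠ 1)]
    have heq : (α ^ n - 1) / (α - 1) = (1 - α ^ n) / (1 - α) := by
      rw [div_eq_div_iff (by linarith) (by linarith)]
      ring
    rw [heq]
    gcongr
    linarith [pow_nonneg hα0 n]
  have hεS : ε * (∑ k ∈ Finset.range n, α ^ k) ≤ 5 * ε / (1 - α) := by
    calc ε * (∑ k ∈ Finset.range n, α ^ k) ≤ ε * (1 / (1 - α)) :=
          mul_le_mul_of_nonneg_left hS hε.le
    _ = ε / (1 - α) := by ring
    _ ≤ 5 * ε / (1 - α) := by gcongr; linarith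
  exact add_le_add hεS (le_refl _)
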